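/- The edge group R_e has order 980995276800 = 12! · 2^11. -/

import Mathlib

open Equiv

def Umove : Perm (Fin 48) :=
  c[0, 1, 3, 7] * c[5, 10, 16, 21] * c[24, 25, 28, 35] * c[26, 30, 37, 44] * c[32, 39, 45, 43]

def Lmove : Perm (Fin 48) :=
  c[5, 11, 19, 2] * c[7, 14, 13, 18] * c[30, 39, 46, 27] * c[24, 26, 31, 41] * c[35, 34, 40, 45]

def Fmove : Perm (Fin 48) :=
  c[21, 17, 22, 14] * c[3, 8, 15, 11] * c[26, 32, 42, 34] * c[28, 36, 31, 39] * c[35, 44, 38, 46]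

def Rmove : Perm (Fin 48) :=
  c[16, 12, 20, 8] * c[1, 4, 9, 17] * c[44, 43, 47, 36] * c[25, 29, 38, 32] * c[28, 37, 33, 42]

def Bmove : Perm (Fin 48) :=
  c[10, 18, 23, 4] * c[0, 2, 6, 12] * c[37, 45, 41, 29] * c[24, 27, 33, 43] * c[25, 30, 40, 47]

def Dmove : Perm (Fin 48) :=
  c[15, 9, 6, 13] * c[22, 20, 23, 19] * c[31, 38, 33, 40] * c[34, 36, 29, 27] * c[42, 47, 41, 46]

set_option maxRecDepth 100000 in
def uEdge : Perm {x : Fin 48 // (x : ℕ) < 24} := Umove.subtypePerm (by decide)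
set_option maxRecDepth 100000 in
def lEdge : Perm {x : Fin 48 // (x : ℕ) < 24} := Lmove.subtypePerm (by decide)
set_option maxRecDepth 100000 in
def fEdge : Perm {x : Fin 48 // (x : ℕ) < 24} := Fmove.subtypePerm (by decide)
set_option maxRecDepth 100000 in
def rEdge : Perm {x : Fin 48 // (x : ℕ) < 24} := Rmove.subtypePerm (by decide)
set_option maxRecDepth 100000 in
def bEdge : Perm {x : Fin 48 // (x : ℕ) < 24} := Bmove.subtypePerm (by decide)
set_option maxRecDepth 100000 in
def dEdge : Perm {x : Fin 48 // (x : ℕ) < 24} := Dmove.subtypePerm (by decide)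

/-- The edge group `R_e`, generated by the restrictions of the six face moves
to the edge facelets. -/
def edgeGroup : Subgroup (Perm {x : Fin 48 // (x : ℕ) < 24}) :=
  Subgroup.closure {uEdge, lEdge, fEdge, rEdge, bEdge, dEdge}


abbrev X := {x : Fin 48 // (x : ℕ) < 24}

def encTbl : Fin 24 → Fin 12 × ZMod 2 :=
  ![(0,0),(1,0),(2,0),(3,0),(4,0),(5,0),(6,0),(5,1),(7,0),(8,0),(0,1),(9,0),
    (4,1),(10,0),(9,1),(11,0),(1,1),(7,1),(2,1),(10,1),(8,1),(3,1),(11,1),(6,1)]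

def decTbl : Fin 12 × ZMod 2 → Fin 24 := fun p =>
  if p.2 = 0 then (![0,1,2,3,4,5,6,8,9,11,13,15] : Fin 12 → Fin 24) p.1
  else (![10,16,18,21,12,7,23,17,20,14,19,22] : Fin 12 → Fin 24) p.1

def enc : X ≃ Fin 12 × ZMod 2 where
  toFun x := encTbl ⟨x.1.1, x.2⟩
  invFun p := ⟨⟨(decTbl p).1, by omega⟩, by exact (decTbl p).2⟩
  left_inv := by decide
  right_inv := by decide

def base (σ : Perm (Fin 12)) (v : Fin 12 → ZMod 2) : Perm (Fin 12 × ZMod 2) where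
  toFun p := (σ p.1, p.2 + v p.1)
  invFun p := (σ⁻¹ p.1, p.2 + v (σ⁻¹ p.1))
  left_inv p := by
    simp only [Perm.coe_inv, symm_apply_apply]
    ext
    · rfl
    · show p.2 + v p.1 + v p.1 = p.2
      rw [add_assoc, CharTwo.add_self_eq_zero, add_zero]
  right_inv p := by
    simp only [Perm.coe_inv, apply_symm_apply]
    ext
    · rfl
    · show p.2 + v (σ⁻¹ p.1) + v (σ⁻¹ p.1) = p.2
      rw [add_assoc, CharTwo.add_self_eq_zero, add_zero]

def W (σ : Perm (Fin 12)) (v : Fin 12 → ZMod 2) : Perm X :=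
  (enc.trans (base σ v)).trans enc.symm

theorem Wmul (σ₁ σ₂ : Perm (Fin 12)) (v₁ v₂ : Fin 12 → ZMod 2) :
    W σ₁ v₁ * W σ₂ v₂ = W (σ₁ * σ₂) (fun e => v₂ e + v₁ (σ₂ e)) := by
  ext x
  simp [W, base, Perm.mul_apply, add_assoc]

theorem Wone : W 1 0 = 1 := by
  ext x
  simp [W, base]

theorem Winv (σ : Perm (Fin 12)) (v : Fin 12 → ZMod 2) :
    (W σ v)⁻¹ = W σ⁻¹ (fun e => v (σ⁻¹ e)) := by
  rw [inv_eq_iff_mul_eq_one, Wmul]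
  rw [show σ * σ⁻¹ = 1 from mul_inv_cancel σ]
  rw [show (fun e => v (σ⁻¹ e) + v (σ⁻¹ e)) = 0 by
    funext e; exact CharTwo.add_self_eq_zero _]
  exact Wone

theorem Winj {σ σ' : Perm (Fin 12)} {v v' : Fin 12 → ZMod 2} (h : W σ v = W σ' v') :
    σ = σ' ∧ v = v' := by
  have key : ∀ e : Fin 12, σ e = σ' e ∧ v e = v' e := by
    intro e
    have := congrArg (fun g : Perm X => enc (g (enc.symm (e, 0)))) h
    simp [W, base, Prod.ext_iff] at this
    exact this
  exact ⟨Equiv.ext fun e => (key e).1, funext fun e => (key e).2⟩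

def K : Subgroup (Perm X) where
  carrier := {g | ∃ σ v, (∑ e, v e = 0) ∧ g = W σ v}
  one_mem' := ⟨1, 0, by simp, Wone.symm⟩
  mul_mem' := by
    rintro a b ⟨σa, va, ha, rfl⟩ ⟨σb, vb, hb, rfl⟩
    refine ⟨σa * σb, fun e => vb e + va (σb e), ?_, (Wmul _ _ _ _)⟩
    rw [Finset.sum_add_distrib, hb, Equiv.sum_comp σb va, ha, add_zero]
  inv_mem' := by
    rintro a ⟨σ, v, h, rfl⟩
    exact ⟨σ⁻¹, fun e => v (σ⁻¹ e), by rw [Equiv.sum_comp σ⁻¹ v, h], Winv σ v⟩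

theorem mem_K {g : Perm X} : g ∈ K ↔ ∃ σ v, (∑ e, v e = 0) ∧ g = W σ v := Iff.rfl

-- generator permutation parts, as explicit vector-based permutations
def pU : Perm (Fin 12) := ⟨![1,3,2,5,4,0,6,7,8,9,10,11], ![5,0,2,1,4,3,6,7,8,9,10,11], by decide, by decide⟩
def pL : Perm (Fin 12) := ⟨![0,1,5,3,4,9,6,7,8,10,2,11], ![0,1,10,3,4,2,6,7,8,5,9,11], by decide, by decide⟩
def pF : Perm (Fin 12) := ⟨![0,1,2,7,4,5,6,11,8,3,10,9], ![0,1,2,9,4,5,6,3,8,11,10,7], by decide, by decide⟩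
def pR : Perm (Fin 12) := ⟨![0,4,2,3,8,5,6,1,7,9,10,11], ![0,7,2,3,1,5,6,8,4,9,10,11], by decide, by decide⟩
def pB : Perm (Fin 12) := ⟨![2,1,6,3,0,5,4,7,8,9,10,11], ![4,1,0,3,6,5,2,7,8,9,10,11], by decide, by decide⟩
def pD : Perm (Fin 12) := ⟨![0,1,2,3,4,5,10,7,6,9,11,8], ![0,1,2,3,4,5,8,7,11,9,6,10], by decide, by decide⟩

theorem uW : uEdge = W pU ![0,0,0,1,0,1,0,0,0,0,0,0] := by decide
theorem lW : lEdge = W pL ![0,0,0,0,0,0,0,0,0,1,1,0] := by decide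
theorem fW : fEdge = W pF ![0,0,0,0,0,0,0,0,0,0,0,0] := by decide
theorem rW : rEdge = W pR ![0,0,0,0,0,0,0,1,1,0,0,0] := by decide
theorem bW : bEdge = W pB ![0,0,0,0,1,0,1,0,0,0,0,0] := by decide
theorem dW : dEdge = W pD ![0,0,0,0,0,0,0,0,0,0,0,0] := by decide

theorem uMem : uEdge ∈ edgeGroup := Subgroup.subset_closure (by simp)
theorem lMem : lEdge ∈ edgeGroup := Subgroup.subset_closure (by simp)
theorem fMem : fEdge ∈ edgeGroup := Subgroup.subset_closure (by simp)
theorem rMem : rEdge ∈ edgeGroup := Subgroup.subset_closure (by simp)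
theorem bMem : bEdge ∈ edgeGroup := Subgroup.subset_closure (by simp)
theorem dMem : dEdge ∈ edgeGroup := Subgroup.subset_closure (by simp)

theorem edge_le_K : edgeGroup ≤ K := by
  rw [edgeGroup, Subgroup.closure_le]
  rintro g (rfl | rfl | rfl | rfl | rfl | rfl)
  · exact ⟨_, _, by decide, uW⟩
  · exact ⟨_, _, by decide, lW⟩
  · exact ⟨_, _, by decide, fW⟩
  · exact ⟨_, _, by decide, rW⟩
  · exact ⟨_, _, by decide, bW⟩
  · exact ⟨_, _, by decide, dW⟩

/-- subgroup of permutation parts achievable in `edgeGroup`. -/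
def Sgrp : Subgroup (Perm (Fin 12)) where
  carrier := {σ | ∃ v, W σ v ∈ edgeGroup}
  one_mem' := ⟨0, by rw [Wone]; exact one_mem _⟩
  mul_mem' := by
    rintro a b ⟨va, ha⟩ ⟨vb, hb⟩
    exact ⟨_, by rw [← Wmul]; exact mul_mem ha hb⟩
  inv_mem' := by
    rintro a ⟨v, h⟩
    exact ⟨_, by rw [← Winv]; exact inv_mem h⟩

theorem Weq {σ σ' : Perm (Fin 12)} {v v' : Fin 12 → ZMod 2} (h1 : σ = σ') (h2 : v = v') :
    W σ v = W σ' v' := by rw [h1, h2]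

set_option maxRecDepth 4000 in
theorem transW :
    (bEdge*dEdge*lEdge*uEdge*bEdge*bEdge*dEdge*lEdge*fEdge)^7
      = W (Equiv.swap 0 10) ![1,0,1,0,0,0,1,0,0,1,0,0] := by
  simp only [uW, lW, fW, rW, bW, dW]
  simp only [pow_succ, pow_zero, one_mul, Wmul]
  exact Weq (by decide) (by decide)

set_option maxRecDepth 4000 in
theorem cycW :
    dEdge*lEdge*lEdge*fEdge*rEdge*bEdge*fEdge*lEdge*fEdge*rEdge*uEdge*dEdge*rEdge*bEdge*bEdge
      = W c[(0:Fin 12),10,5,9,1,8,4,11,3,7,2,6] ![1,1,0,1,0,1,1,1,0,1,0,1] := by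
  simp only [uW, lW, fW, rW, bW, dW]
  simp only [Wmul]
  exact Weq (by decide) (by decide)

set_option maxRecDepth 4000 in
theorem flipW :
    (fEdge*rEdge*dEdge*fEdge*lEdge*bEdge*fEdge*uEdge*lEdge*uEdge*rEdge*bEdge)^9
      = W 1 ![0,0,0,0,0,0,1,0,0,0,1,0] := by
  simp only [uW, lW, fW, rW, bW, dW]
  simp only [pow_succ, pow_zero, one_mul, Wmul]
  exact Weq (by decide) (by decide)

theorem cyc_mem_S : c[(0:Fin 12),10,5,9,1,8,4,11,3,7,2,6] ∈ Sgrp :=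
  ⟨_, by
    rw [← cycW]
    exact mul_mem (mul_mem (mul_mem (mul_mem (mul_mem (mul_mem (mul_mem (mul_mem (mul_mem
      (mul_mem (mul_mem (mul_mem (mul_mem (mul_mem dMem lMem) lMem) fMem) rMem) bMem) fMem)
      lMem) fMem) rMem) uMem) dMem) rMem) bMem) bMem⟩

theorem trans_mem_S : Equiv.swap (0 : Fin 12) 10 ∈ Sgrp :=
  ⟨_, by
    rw [← transW]
    exact pow_mem (mul_mem (mul_mem (mul_mem (mul_mem (mul_mem (mul_mem (mul_mem
      (mul_mem bMem dMem) lMem) uMem) bMem) bMem) dMem) lMem) fMem) 7⟩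

set_option maxRecDepth 2000 in
theorem Stop : Sgrp = ⊤ := by
  have h1 : Perm.IsCycle (c[(0:Fin 12),10,5,9,1,8,4,11,3,7,2,6]) :=
    Cycle.isCycle_formPerm _ _ ⟨0, 10, by decide, by decide, by decide⟩
  have h2 : (c[(0:Fin 12),10,5,9,1,8,4,11,3,7,2,6]).support = Finset.univ := by decide
  have h3 := Equiv.Perm.closure_cycle_adjacent_swap h1 h2 0
  rw [eq_top_iff, ← h3, Subgroup.closure_le]
  intro g hg
  simp only [Set.mem_insert_iff, Set.mem_singleton_iff] at hg
  rcases hg with rfl | rfl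
  · exact cyc_mem_S
  · have e : (c[(0:Fin 12),10,5,9,1,8,4,11,3,7,2,6]) 0 = (10 : Fin 12) := by decide
    rw [e]
    exact trans_mem_S

def δ (i : Fin 12) : Fin 12 → ZMod 2 := fun e => if e = i then 1 else 0

theorem baseflip : W 1 (δ 6 + δ 10) ∈ edgeGroup := by
  rw [show W 1 (δ 6 + δ 10) = W 1 ![0,0,0,0,0,0,1,0,0,0,1,0] from Weq rfl (by decide), ← flipW]
  exact pow_mem (mul_mem (mul_mem (mul_mem (mul_mem (mul_mem (mul_mem (mul_mem (mul_mem
    (mul_mem (mul_mem (mul_mem fMem rMem) dMem) fMem) lMem) bMem) fMem) uMem) lMem) uMem)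
    rMem) bMem) 9

theorem pairflip (i j : Fin 12) (hij : i ≠ j) : W 1 (δ i + δ j) ∈ edgeGroup := by
  have hib : i ≠ Equiv.swap 6 i 10 := by
    intro h
    have h2 := congrArg (Equiv.swap 6 i) h
    rw [Equiv.swap_apply_right, Equiv.swap_apply_self] at h2
    exact (by decide : (6 : Fin 12) ≠ 10) h2
  obtain ⟨σ, hσ6, hσ10⟩ : ∃ σ : Perm (Fin 12), σ 6 = i ∧ σ 10 = j := by
    refine ⟨Equiv.swap (Equiv.swap 6 i 10) j * Equiv.swap 6 i, ?_, ?_⟩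
    · rw [Perm.mul_apply, Equiv.swap_apply_left, Equiv.swap_apply_of_ne_of_ne hib hij]
    · rw [Perm.mul_apply, Equiv.swap_apply_left]
  obtain ⟨u, hu⟩ : σ ∈ Sgrp := by rw [Stop]; trivial
  have hc : W σ u * W 1 (δ 6 + δ 10) * (W σ u)⁻¹ ∈ edgeGroup :=
    mul_mem (mul_mem hu baseflip) (inv_mem hu)
  have key : W σ u * W 1 (δ 6 + δ 10) * (W σ u)⁻¹ = W 1 (δ i + δ j) := by
    rw [Winv, Wmul, Wmul]
    refine Weq (by group) ?_
    funext e
    have hz : ∀ a b c : ZMod 2, a + (b + c + a) = b + c := by decide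
    have h6 : (σ⁻¹ e = 6) ↔ (e = i) := by rw [Perm.inv_eq_iff_eq, hσ6]
    have h10 : (σ⁻¹ e = 10) ↔ (e = j) := by rw [Perm.inv_eq_iff_eq, hσ10]
    simp only [Perm.one_apply, Pi.add_apply, δ, h6, h10]
    exact hz _ _ _
  rwa [key] at hc

theorem WmulFlip (a b : Fin 12 → ZMod 2) : W 1 a * W 1 b = W 1 (a + b) := by
  rw [Wmul]
  exact Weq (one_mul 1) (funext fun e => by simp [Pi.add_apply, add_comm])

theorem flipmem (v : Fin 12 → ZMod 2) (hv : ∑ e, v e = 0) : W 1 v ∈ edgeGroup := by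
  have hone : ∀ z : ZMod 2, z = 0 ∨ z = 1 := by decide
  have hrepr : v = ∑ i : Fin 12, v i • (δ i + δ 0) := by
    funext e
    rw [Finset.sum_apply]
    simp only [Pi.smul_apply, Pi.add_apply, δ, smul_eq_mul, mul_add]
    rw [Finset.sum_add_distrib]
    simp only [mul_ite, mul_one, mul_zero]
    rw [Finset.sum_ite_eq Finset.univ e v]
    simp only [Finset.mem_univ, if_true]
    rcases em (e = (0 : Fin 12)) with h0 | h0
    · subst h0; simp [hv]
    · simp [h0]
  rw [hrepr]
  have key : ∀ s : Finset (Fin 12), W 1 (∑ i ∈ s, v i • (δ i + δ 0)) ∈ edgeGroup := by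
    intro s
    induction s using Finset.induction with
    | empty => rw [Finset.sum_empty, Wone]; exact one_mem _
    | insert _ _ hnotin ih =>
      rename_i a s'
      rw [Finset.sum_insert hnotin, ← WmulFlip]
      refine mul_mem ?_ ih
      rcases hone (v a) with h | h
      · rw [h, zero_smul, Wone]; exact one_mem _
      · rw [h, one_smul]
        rcases em (a = (0 : Fin 12)) with h0 | h0
        · subst h0
          rw [show δ (0:Fin 12) + δ 0 = 0 from CharTwo.add_self_eq_zero _, Wone]
          exact one_mem _
        · exact pairflip a 0 h0
  exact key Finset.univ

theorem K_le_edge : K ≤ edgeGroup := by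
  rintro g ⟨σ, v, hv, rfl⟩
  obtain ⟨u, hu⟩ : σ ∈ Sgrp := by rw [Stop]; trivial
  obtain ⟨σ', u', hu', hEq⟩ := edge_le_K hu
  obtain ⟨h1, h2⟩ := Winj hEq
  subst h1; subst h2
  have hmm : (W σ u)⁻¹ * W σ v = W 1 (fun e => v e + u e) := by
    rw [Winv, Wmul]
    exact Weq (inv_mul_cancel σ) (funext fun e => by rw [Perm.coe_inv, symm_apply_apply])
  have hflip : W 1 (fun e => v e + u e) ∈ edgeGroup := by
    refine flipmem _ ?_
    rw [Finset.sum_add_distrib, hv, hu', add_zero]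
  have : W σ v = W σ u * ((W σ u)⁻¹ * W σ v) := by rw [mul_inv_cancel_left]
  rw [this, hmm]
  exact mul_mem hu hflip

theorem edge_eq_K : edgeGroup = K := le_antisymm edge_le_K K_le_edge

noncomputable def KEquiv : Perm (Fin 12) × {v : Fin 12 → ZMod 2 // ∑ e, v e = 0} ≃ K :=
  Equiv.ofBijective (fun p => ⟨W p.1 p.2.1, p.1, p.2.1, p.2.2, rfl⟩)
    ⟨by
      rintro ⟨σ, v, hv⟩ ⟨σ', v', hv'⟩ h
      obtain ⟨h1, h2⟩ := Winj (Subtype.ext_iff.mp h)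
      exact Prod.ext h1 (Subtype.ext h2),
     by
      rintro ⟨g, σ, v, hv, rfl⟩
      exact ⟨(σ, ⟨v, hv⟩), rfl⟩⟩

def evenEquiv : {v : Fin 12 → ZMod 2 // ∑ e, v e = 0} ≃ (Fin 11 → ZMod 2) where
  toFun v i := v.1 i.castSucc
  invFun w := ⟨Fin.snoc w (∑ i, w i), by
    rw [Fin.sum_univ_castSucc]
    simp only [Fin.snoc_castSucc, Fin.snoc_last]
    exact CharTwo.add_self_eq_zero _⟩
  left_inv v := by
    ext e
    refine Fin.lastCases ?_ ?_ e
    · simp only [Fin.snoc_last]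
      have h := v.2
      rw [Fin.sum_univ_castSucc] at h
      have : ∀ a b : ZMod 2, a + b = 0 → a = b := by decide
      exact this _ _ h
    · intro i
      simp only [Fin.snoc_castSucc]
  right_inv w := by funext i; simp only [Fin.snoc_castSucc]

theorem card_K : Nat.card K = 980995276800 := by
  rw [← Nat.card_congr KEquiv, Nat.card_prod, Nat.card_congr evenEquiv]
  rw [Nat.card_eq_fintype_card, Nat.card_eq_fintype_card, Fintype.card_perm, Fintype.card_fin,
    Fintype.card_fun, ZMod.card, Fintype.card_fin]
  norm_num [Nat.factorial]

/-- The edge group `R_e` has order `980995276800 = 12! · 2^11`. -/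
theorem card_edgeGroup :
    Nat.card edgeGroup = 980995276800 ∧ 980995276800 = Nat.factorial 12 * 2 ^ 11 := by
  constructor
  · rw [edge_eq_K]
    exact card_K
  · norm_num [Nat.factorial]
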